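/- Let G be an undirected graph, S a set of edges of G, and X a set of vertices such that G - X contains no cycle through an edge of S. Then the graph obtained from G - X by contracting each connected component of (G - X) - S to a single vertex and keeping only the edges of S is a forest; moreover, between any two connected components of (G - X) - S there is at most one edge of S. -/

import Mathlib

open SimpleGraph

/-- Key contradiction lemma: if `u, v ∉ X`, `s(u,v) ∈ S`, and `u` is reachable from `v`
in `(G - X)` minus the edge `s(u,v)`, then there is an `S`-cycle avoiding `X`,
contradicting `hX`. -/
lemma stmt0_key {V : Type} (G : SimpleGraph V) (S : Set (Sym2 V)) (hS : S ⊆ G.edgeSet)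
    (X : Set V)
    (hX : ∀ (v : V) (c : G.Walk v v), c.IsCycle → (∃ e ∈ c.edges, e ∈ S) →
      ∃ x ∈ X, x ∈ c.support)
    (u v : {v : V // v ∉ X}) (huv : s(u.1, v.1) ∈ S)
    (hR : ((G.induce {v : V | v ∉ X}) \
      SimpleGraph.fromEdgeSet {s(u, v)}).Reachable u v) : False := by
  have hGadj : G.Adj u.1 v.1 := (G.mem_edgeSet).mp (hS huv)
  have hadj : (G.induce {v : V | v ∉ X}).Adj u v := by
    simpa [SimpleGraph.comap_adj] using hGadj
  obtain ⟨w, p, hcyc, hmem⟩ :=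
    (SimpleGraph.adj_and_reachable_delete_edges_iff_exists_cycle).mp ⟨hadj, hR⟩
  let f : G.induce {v : V | v ∉ X} ↪g G := SimpleGraph.Embedding.induce {v : V | v ∉ X}
  have hcyc' : (p.map f.toHom).IsCycle := hcyc.map f.injective
  have hmem' : s(u.1, v.1) ∈ (p.map f.toHom).edges := by
    rw [SimpleGraph.Walk.edges_map]
    have : Sym2.map f.toHom s(u, v) = s(u.1, v.1) := by
      rw [Sym2.map_pair_eq]; rfl
    exact this ▸ List.mem_map_of_mem (f := Sym2.map f.toHom) hmem
  obtain ⟨x, hxX, hxs⟩ := hX (f.toHom w) (p.map f.toHom) hcyc' ⟨_, hmem', huv⟩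
  rw [SimpleGraph.Walk.support_map] at hxs
  obtain ⟨y, -, rfl⟩ := List.mem_map.mp hxs
  exact y.2 hxX

/-- If `G - X` has no `S`-cycle, then the graph obtained from `G - X` by contracting each
connected component of `(G - X) - S` (each "bubble") to a single vertex, keeping only
the edges of `S`, is a forest; moreover between any two bubbles there is at most one
edge of `S`. -/
theorem stmt0 {V : Type} [Fintype V] [DecidableEq V] (G : SimpleGraph V)
    (S : Set (Sym2 V)) (hS : S ⊆ G.edgeSet) (X : Set V)
    (hX : ∀ (v : V) (c : G.Walk v v), c.IsCycle → (∃ e ∈ c.edges, e ∈ S) →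
      ∃ x ∈ X, x ∈ c.support) :
    letI H := (G.deleteEdges S).induce {v : V | v ∉ X}
    letI cc := H.connectedComponentMk
    letI B : SimpleGraph H.ConnectedComponent := SimpleGraph.fromRel
      (fun C D => ∃ u v : {v : V // v ∉ X}, cc u = C ∧ cc v = D ∧ s(u.1, v.1) ∈ S)
    B.IsAcyclic ∧
      ∀ C D : H.ConnectedComponent, C ≠ D →
        ∀ u v u' v' : {v : V // v ∉ X},
          cc u = C → cc v = D → cc u' = C → cc v' = D →
          s(u.1, v.1) ∈ S → s(u'.1, v'.1) ∈ S → s(u.1, v.1) = s(u'.1, v'.1) := by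
  classical
  set H : SimpleGraph {v : V | v ∉ X} := (G.deleteEdges S).induce {v : V | v ∉ X} with hH
  set cc : {v : V | v ∉ X} → H.ConnectedComponent := H.connectedComponentMk with hcc
  set B : SimpleGraph H.ConnectedComponent := SimpleGraph.fromRel
      (fun C D => ∃ u v : {v : V // v ∉ X}, cc u = C ∧ cc v = D ∧ s(u.1, v.1) ∈ S) with hB
  -- H is below (G - X) minus any S-edge
  have hHle : ∀ (u v : {v : V // v ∉ X}), s(u.1, v.1) ∈ S →
      H ≤ (G.induce {v : V | v ∉ X}) \ SimpleGraph.fromEdgeSet {s(u, v)} := by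
    intro u v huv x y hxy
    have h1 : G.Adj x.1 y.1 ∧ s(x.1, y.1) ∉ S := by
      simpa [H, SimpleGraph.comap_adj, SimpleGraph.deleteEdges_adj] using hxy
    rw [SimpleGraph.sdiff_adj]
    constructor
    · simpa [SimpleGraph.comap_adj] using h1.1
    · intro hcon
      rw [SimpleGraph.fromEdgeSet_adj] at hcon
      have : s(x.1, y.1) = s(u.1, v.1) := by
        have := congrArg (Sym2.map Subtype.val) hcon.1.symm
        simpa [Sym2.map_pair_eq] using this.symm
      exact h1.2 (this ▸ huv)
  -- adjacency in (G - X) \ {s(u,v)} from a different S-edge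
  have hedge : ∀ (u v a b : {v : V // v ∉ X}), s(u.1, v.1) ∈ S → s(a.1, b.1) ∈ S →
      s(a, b) ≠ s(u, v) →
      ((G.induce {v : V | v ∉ X}) \ SimpleGraph.fromEdgeSet {s(u, v)}).Adj a b := by
    intro u v a b huv hab hne
    rw [SimpleGraph.sdiff_adj]
    refine ⟨by simpa [SimpleGraph.comap_adj] using (G.mem_edgeSet).mp (hS hab), ?_⟩
    intro hcon
    rw [SimpleGraph.fromEdgeSet_adj] at hcon
    exact hne hcon.1
  -- reachability within a bubble
  have hbub : ∀ (u v a b : {v : V // v ∉ X}), s(u.1, v.1) ∈ S → cc a = cc b →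
      ((G.induce {v : V | v ∉ X}) \ SimpleGraph.fromEdgeSet {s(u, v)}).Reachable a b := by
    intro u v a b huv hcc
    exact ((SimpleGraph.ConnectedComponent.eq.mp hcc).mono (hHle u v huv))
  constructor
  · -- acyclicity
    intro C p hcyc
    cases p with
    | nil => exact hcyc.ne_nil rfl
    | @cons _ C₁ _ hadj q =>
      have hmem : s(C, C₁) ∈ (SimpleGraph.Walk.cons hadj q).edges := by simp
      obtain ⟨hBadj, hreach⟩ :=
        (SimpleGraph.adj_and_reachable_delete_edges_iff_exists_cycle (G := B)).mpr
          ⟨C, SimpleGraph.Walk.cons hadj q, hcyc, hmem⟩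
      -- extract an S-edge witnessing the B-edge C C₁
      rw [SimpleGraph.fromRel_adj] at hBadj
      obtain ⟨hne, hrel⟩ := hBadj
      obtain ⟨u, v, hu, hv, huv⟩ : ∃ u v : {v : V // v ∉ X},
          cc u = C ∧ cc v = C₁ ∧ s(u.1, v.1) ∈ S := by
        rcases hrel with ⟨u, v, hu, hv, huv⟩ | ⟨u, v, hu, hv, huv⟩
        · exact ⟨u, v, hu, hv, huv⟩
        · exact ⟨v, u, hv, hu, by rwa [Sym2.eq_swap]⟩
      -- lift the B-walk from C to C₁ avoiding s(C,C₁) to a walk in (G-X) \ {s(u,v)}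
      obtain ⟨W⟩ := hreach
      have lift : ∀ {P Q : H.ConnectedComponent}
          (W : (B \ SimpleGraph.fromEdgeSet {s(C, C₁)}).Walk P Q)
          (a b : {v : V // v ∉ X}), cc a = P → cc b = Q →
          ((G.induce {v : V | v ∉ X}) \
            SimpleGraph.fromEdgeSet {s(u, v)}).Reachable a b := by
        intro P Q W
        induction W with
        | nil => intro a b ha hb; exact hbub u v a b huv (ha.trans hb.symm)
        | @cons P P' Q h W ih =>
          intro a b ha hb
          rw [SimpleGraph.sdiff_adj] at h
          obtain ⟨hB, hnotdel⟩ := h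
          rw [SimpleGraph.fromRel_adj] at hB
          obtain ⟨hPP', hrel'⟩ := hB
          obtain ⟨u₁, v₁, hu₁, hv₁, huv₁⟩ : ∃ u₁ v₁ : {v : V // v ∉ X},
              cc u₁ = P ∧ cc v₁ = P' ∧ s(u₁.1, v₁.1) ∈ S := by
            rcases hrel' with ⟨u₁, v₁, h1, h2, h3⟩ | ⟨u₁, v₁, h1, h2, h3⟩
            · exact ⟨u₁, v₁, h1, h2, h3⟩
            · exact ⟨v₁, u₁, h2, h1, by rwa [Sym2.eq_swap]⟩
          have hnedge : s(u₁, v₁) ≠ s(u, v) := by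
            intro hcon
            apply hnotdel
            rw [SimpleGraph.fromEdgeSet_adj]
            refine ⟨?_, hPP'⟩
            have := congrArg (Sym2.map cc) hcon
            rw [Sym2.map_pair_eq, Sym2.map_pair_eq, hu₁, hv₁, hu, hv] at this
            simpa using this
          exact ((hbub u v a u₁ huv (ha.trans hu₁.symm)).trans
            (SimpleGraph.Adj.reachable (hedge u v u₁ v₁ huv huv₁ hnedge))).trans
            (ih v₁ b hv₁ hb)
      have hfin := lift W u v hu hv
      exact stmt0_key G S hS X hX u v huv hfin
  · -- at most one S-edge between two bubbles
    intro C D hCD u v u' v' hu hv hu' hv' huv hu'v'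
    by_contra hne
    have hnedge : s(u', v') ≠ s(u, v) := by
      intro hcon
      apply hne
      have := congrArg (Sym2.map Subtype.val) hcon
      simpa [Sym2.map_pair_eq] using this.symm
    have hreach : ((G.induce {v : V | v ∉ X}) \
        SimpleGraph.fromEdgeSet {s(u, v)}).Reachable u v :=
      ((hbub u v u u' huv (hu.trans hu'.symm)).trans
        (SimpleGraph.Adj.reachable (hedge u v u' v' huv hu'v' hnedge))).trans
        (hbub u v v' v huv (hv'.trans hv.symm))
    exact stmt0_key G S hS X hX u v huv hreach
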